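/- arXiv:0803.4232 — 7 statements merged into one kernel-verified Lean document; each statement's English description precedes it below -/
import Mathlib

section
/- The cosine law is an involution: if cos y_i = (cos x_i + cos x_j cos x_k)/(sin x_j sin x_k) for all {i,j,k}={1,2,3}, then cos x_i = (cos y_i − cos y_j cos y_k)/(sin y_j sin y_k). -/
set_option maxHeartbeats 1000000

open Real Set

/-- The cosine law is an involution: if `cos y_i = (cos x_i + cos x_j cos x_k)/(sin x_j sin x_k)`
for all `{i,j,k} = {1,2,3}`, then `cos x_i = (cos y_i - cos y_j cos y_k)/(sin y_j sin y_k)`. -/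
theorem cosine_law_involution (x1 x2 x3 y1 y2 y3 : ℝ)
    (hx1 : x1 ∈ Ioo 0 π) (hx2 : x2 ∈ Ioo 0 π) (hx3 : x3 ∈ Ioo 0 π)
    (hy1 : y1 ∈ Ioo 0 π) (hy2 : y2 ∈ Ioo 0 π) (hy3 : y3 ∈ Ioo 0 π)
    (h1 : cos y1 = (cos x1 + cos x2 * cos x3) / (sin x2 * sin x3))
    (h2 : cos y2 = (cos x2 + cos x3 * cos x1) / (sin x3 * sin x1))
    (h3 : cos y3 = (cos x3 + cos x1 * cos x2) / (sin x1 * sin x2))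
    (h23 : sin y2 * sin y3 ≠ 0) (h31 : sin y3 * sin y1 ≠ 0) (h12 : sin y1 * sin y2 ≠ 0) :
    cos x1 = (cos y1 - cos y2 * cos y3) / (sin y2 * sin y3) ∧
    cos x2 = (cos y2 - cos y3 * cos y1) / (sin y3 * sin y1) ∧
    cos x3 = (cos y3 - cos y1 * cos y2) / (sin y1 * sin y2) := by
  have p1 : (0:ℝ) < sin x1 := sin_pos_of_pos_of_lt_pi hx1.1 hx1.2
  have p2 : (0:ℝ) < sin x2 := sin_pos_of_pos_of_lt_pi hx2.1 hx2.2
  have p3 : (0:ℝ) < sin x3 := sin_pos_of_pos_of_lt_pi hx3.1 hx3.2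
  have q1 : (0:ℝ) < sin y1 := sin_pos_of_pos_of_lt_pi hy1.1 hy1.2
  have q2 : (0:ℝ) < sin y2 := sin_pos_of_pos_of_lt_pi hy2.1 hy2.2
  have q3 : (0:ℝ) < sin y3 := sin_pos_of_pos_of_lt_pi hy3.1 hy3.2
  have a1 : sin x1 ^ 2 = 1 - cos x1 ^ 2 := sin_sq x1
  have a2 : sin x2 ^ 2 = 1 - cos x2 ^ 2 := sin_sq x2
  have a3 : sin x3 ^ 2 = 1 - cos x3 ^ 2 := sin_sq x3
  set D : ℝ := 1 - cos x1 ^ 2 - cos x2 ^ 2 - cos x3 ^ 2 - 2 * cos x1 * cos x2 * cos x3 with hD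
  have e1 : sin y1 ^ 2 * (sin x2 * sin x3) ^ 2 = D := by
    rw [sin_sq, h1, div_pow, sub_mul, one_mul,
      div_mul_cancel₀ _ (pow_ne_zero 2 (by positivity : sin x2 * sin x3 ≠ 0))]
    rw [hD]; linear_combination sin x3 ^ 2 * a2 + (1 - cos x2 ^ 2) * a3
  have e2 : sin y2 ^ 2 * (sin x3 * sin x1) ^ 2 = D := by
    rw [sin_sq, h2, div_pow, sub_mul, one_mul,
      div_mul_cancel₀ _ (pow_ne_zero 2 (by positivity : sin x3 * sin x1 ≠ 0))]
    rw [hD]; linear_combination sin x1 ^ 2 * a3 + (1 - cos x3 ^ 2) * a1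
  have e3 : sin y3 ^ 2 * (sin x1 * sin x2) ^ 2 = D := by
    rw [sin_sq, h3, div_pow, sub_mul, one_mul,
      div_mul_cancel₀ _ (pow_ne_zero 2 (by positivity : sin x1 * sin x2 ≠ 0))]
    rw [hD]; linear_combination sin x2 ^ 2 * a1 + (1 - cos x1 ^ 2) * a2
  have hDpos : 0 < D := e1 ▸ by positivity
  have f1 : sin y1 * (sin x2 * sin x3) = Real.sqrt D := by
    rw [← Real.sqrt_sq (by positivity : (0:ℝ) ≤ sin y1 * (sin x2 * sin x3)), mul_pow, e1]
  have f2 : sin y2 * (sin x3 * sin x1) = Real.sqrt D := by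
    rw [← Real.sqrt_sq (by positivity : (0:ℝ) ≤ sin y2 * (sin x3 * sin x1)), mul_pow, e2]
  have f3 : sin y3 * (sin x1 * sin x2) = Real.sqrt D := by
    rw [← Real.sqrt_sq (by positivity : (0:ℝ) ≤ sin y3 * (sin x1 * sin x2)), mul_pow, e3]
  have hSS : Real.sqrt D * Real.sqrt D = D := Real.mul_self_sqrt hDpos.le
  have m1 : sin y2 * sin y3 * (sin x1 ^ 2 * sin x2 * sin x3) = D := by
    have := congrArg₂ (· * ·) f2 f3
    rw [← hSS]; linear_combination this
  have m2 : sin y3 * sin y1 * (sin x2 ^ 2 * sin x3 * sin x1) = D := by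
    have := congrArg₂ (· * ·) f3 f1
    rw [← hSS]; linear_combination this
  have m3 : sin y1 * sin y2 * (sin x3 ^ 2 * sin x1 * sin x2) = D := by
    have := congrArg₂ (· * ·) f1 f2
    rw [← hSS]; linear_combination this
  refine ⟨?_, ?_, ?_⟩
  · rw [eq_div_iff h23]
    have hne : (sin x1 ^ 2 * sin x2 * sin x3) ≠ 0 := by positivity
    apply mul_right_cancel₀ hne
    have lhs : cos x1 * (sin y2 * sin y3) * (sin x1 ^ 2 * sin x2 * sin x3) = cos x1 * D := by
      rw [← m1]; ring
    rw [lhs, h1, h2, h3]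
    field_simp
    rw [hD]
    linear_combination (-(cos x1 + cos x2 * cos x3)) * a1
  · rw [eq_div_iff h31]
    have hne : (sin x2 ^ 2 * sin x3 * sin x1) ≠ 0 := by positivity
    apply mul_right_cancel₀ hne
    have lhs : cos x2 * (sin y3 * sin y1) * (sin x2 ^ 2 * sin x3 * sin x1) = cos x2 * D := by
      rw [← m2]; ring
    rw [lhs, h1, h2, h3]
    field_simp
    rw [hD]
    linear_combination (-(cos x2 + cos x3 * cos x1)) * a2
  · rw [eq_div_iff h12]
    have hne : (sin x3 ^ 2 * sin x1 * sin x2) ≠ 0 := by positivity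
    apply mul_right_cancel₀ hne
    have lhs : cos x3 * (sin y1 * sin y2) * (sin x3 ^ 2 * sin x1 * sin x2) = cos x3 * D := by
      rw [← m3]; ring
    rw [lhs, h1, h2, h3]
    field_simp
    rw [hD]
    linear_combination (-(cos x3 + cos x1 * cos x2)) * a3
end

section
/- With y_i the cosine law function of x, at points where A = sin y_i sin x_j sin x_k ≠ 0, the partial derivative ∂y_i/∂x_i equals sin x_i / A, and ∂y_i/∂x_j = (sin x_i / A) · cos y_k. -/
open Real Set Filter

/-- Derivative formulas for the cosine law function: at a point where
`A = sin y₁ sin x₂ sin x₃ ≠ 0`, one has `∂y₁/∂x₁ = sin x₁ / A` and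
`∂y₁/∂x₂ = (sin x₁ / A) · cos y₃`. -/
theorem cosine_law_partial_derivatives (x1 x2 x3 : ℝ)
    (hx1 : x1 ∈ Ioo 0 π) (hx2 : x2 ∈ Ioo 0 π) (hx3 : x3 ∈ Ioo 0 π)
    -- `y1fun` is `y₁` as a function of `x₁` with `x₂, x₃` fixed:
    (y1fun : ℝ → ℝ) (U : Set ℝ) (hU : U ∈ nhds x1)
    (hy1 : ∀ t ∈ U, y1fun t ∈ Ioo 0 π ∧
      cos (y1fun t) = (cos t + cos x2 * cos x3) / (sin x2 * sin x3))
    -- `z1fun` is `y₁` as a function of `x₂` with `x₁, x₃` fixed: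
    (z1fun : ℝ → ℝ) (V : Set ℝ) (hV : V ∈ nhds x2)
    (hz1 : ∀ t ∈ V, z1fun t ∈ Ioo 0 π ∧
      cos (z1fun t) = (cos x1 + cos t * cos x3) / (sin t * sin x3))
    -- `y₃` at the given point:
    (y3 : ℝ) (hy3mem : y3 ∈ Ioo 0 π)
    (hy3 : cos y3 = (cos x3 + cos x1 * cos x2) / (sin x1 * sin x2))
    (A : ℝ) (hA : A = sin (y1fun x1) * sin x2 * sin x3) (hAne : A ≠ 0) :
    HasDerivAt y1fun (sin x1 / A) x1 ∧
    HasDerivAt z1fun (sin x1 / A * cos y3) x2 := by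
  obtain ⟨hy1mem, hy1cos⟩ := hy1 x1 (mem_of_mem_nhds hU)
  obtain ⟨hz1mem, hz1cos⟩ := hz1 x2 (mem_of_mem_nhds hV)
  have hs1 : 0 < sin x1 := sin_pos_of_pos_of_lt_pi hx1.1 hx1.2
  have hs2 : 0 < sin x2 := sin_pos_of_pos_of_lt_pi hx2.1 hx2.2
  have hs3 : 0 < sin x3 := sin_pos_of_pos_of_lt_pi hx3.1 hx3.2
  have hsy : 0 < sin (y1fun x1) := sin_pos_of_pos_of_lt_pi hy1mem.1 hy1mem.2
  have hsz : 0 < sin (z1fun x2) := sin_pos_of_pos_of_lt_pi hz1mem.1 hz1mem.2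
  have hz_eq : z1fun x2 = y1fun x1 := by
    have hc : cos (z1fun x2) = cos (y1fun x1) := by rw [hz1cos, hy1cos]
    exact injOn_cos ⟨hz1mem.1.le, hz1mem.2.le⟩ ⟨hy1mem.1.le, hy1mem.2.le⟩ hc
  have hpy := sin_sq_add_cos_sq (y1fun x1)
  have hcy2 : cos (y1fun x1) ^ 2 < 1 := by nlinarith
  have hsqrt : Real.sqrt (1 - cos (y1fun x1) ^ 2) = sin (y1fun x1) := by
    rw [show (1 : ℝ) - cos (y1fun x1) ^ 2 = sin (y1fun x1) ^ 2 by nlinarith]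
    exact Real.sqrt_sq hsy.le
  -- the y₃ relation
  have hrel : cos x3 + cos x1 * cos x2 = cos y3 * (sin x1 * sin x2) := by
    field_simp at hy3
    linarith [hy3]
  constructor
  · -- derivative in x1
    have hinner : HasDerivAt (fun t => (cos t + cos x2 * cos x3) / (sin x2 * sin x3))
        (-sin x1 / (sin x2 * sin x3)) x1 :=
      ((Real.hasDerivAt_cos x1).add_const _).div_const _
    have harc : HasDerivAt arccos (-(1 / Real.sqrt (1 - cos (y1fun x1) ^ 2)))
        ((cos x1 + cos x2 * cos x3) / (sin x2 * sin x3)) := by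
      rw [← hy1cos]
      exact Real.hasDerivAt_arccos (by nlinarith) (by nlinarith)
    have hd := harc.comp x1 hinner
    have heq : (fun t => arccos ((cos t + cos x2 * cos x3) / (sin x2 * sin x3))) =ᶠ[nhds x1]
        y1fun := by
      filter_upwards [hU] with t ht
      obtain ⟨hm, hc⟩ := hy1 t ht
      rw [← hc, arccos_cos hm.1.le hm.2.le]
    have hd' := hd.congr_of_eventuallyEq heq.symm
    convert hd' using 1
    case e'_4 => rfl
    case e'_5 => rfl
    rw [hsqrt, hA, mul_assoc]
    ring
  · -- derivative in x2
    have hN : HasDerivAt (fun t => cos x1 + cos t * cos x3) (-sin x2 * cos x3) x2 :=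
      ((Real.hasDerivAt_cos x2).mul_const _).const_add _
    have hD : HasDerivAt (fun t => sin t * sin x3) (cos x2 * sin x3) x2 :=
      (Real.hasDerivAt_sin x2).mul_const _
    have hinner := hN.div hD (by positivity)
    have hcz : cos (z1fun x2) = cos (y1fun x1) := by rw [hz_eq]
    have harc : HasDerivAt arccos (-(1 / Real.sqrt (1 - cos (y1fun x1) ^ 2)))
        ((cos x1 + cos x2 * cos x3) / (sin x2 * sin x3)) := by
      rw [← hy1cos]
      exact Real.hasDerivAt_arccos (by nlinarith) (by nlinarith)
    have hd := harc.comp x2 hinner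
    have heq : (fun t => arccos ((cos x1 + cos t * cos x3) / (sin t * sin x3))) =ᶠ[nhds x2]
        z1fun := by
      filter_upwards [hV] with t ht
      obtain ⟨hm, hc⟩ := hz1 t ht
      rw [← hc, arccos_cos hm.1.le hm.2.le]
    have hd' := hd.congr_of_eventuallyEq heq.symm
    convert hd' using 1
    case e'_4 => rfl
    case e'_5 => rfl
    rw [hsqrt, hA]
    have hp2 := sin_sq_add_cos_sq x2
    field_simp
    linear_combination (-1 : ℝ) * hrel +
      (-(cos x3)) * hp2
end

section
/- With r_i = (x_j + x_k − x_i)/2 and y_i the cosine law function of x, the tangent law holds: tan(y_i/2)/cos(r_i) = tan(y_j/2)/cos(r_j) for all i, j. -/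
open Real Set

set_option maxHeartbeats 1000000 in
theorem tangent_pair (x1 x2 x3 y1 y2 r1 r2 r3 : ℝ)
    (hx1 : x1 ∈ Ioo 0 π) (hx2 : x2 ∈ Ioo 0 π) (hx3 : x3 ∈ Ioo 0 π)
    (hy1 : y1 ∈ Ioo 0 π) (hy2 : y2 ∈ Ioo 0 π)
    (h1 : cos y1 = (cos x1 + cos x2 * cos x3) / (sin x2 * sin x3))
    (h2 : cos y2 = (cos x2 + cos x3 * cos x1) / (sin x3 * sin x1))
    (hr1 : r1 = (x2 + x3 - x1) / 2) (hr2 : r2 = (x3 + x1 - x2) / 2)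
    (hr3 : r3 = (x1 + x2 - x3) / 2)
    (hc1 : cos r1 ≠ 0) (hc2 : cos r2 ≠ 0) :
    tan (y1 / 2) / cos r1 = tan (y2 / 2) / cos r2 := by
  obtain ⟨hx1a, hx1b⟩ := hx1
  obtain ⟨hx2a, hx2b⟩ := hx2
  obtain ⟨hx3a, hx3b⟩ := hx3
  obtain ⟨hy1a, hy1b⟩ := hy1
  obtain ⟨hy2a, hy2b⟩ := hy2
  have sx1 : 0 < sin x1 := sin_pos_of_pos_of_lt_pi hx1a hx1b
  have sx2 : 0 < sin x2 := sin_pos_of_pos_of_lt_pi hx2a hx2b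
  have sx3 : 0 < sin x3 := sin_pos_of_pos_of_lt_pi hx3a hx3b
  have hpi : 0 < π := pi_pos
  have hs1 : 0 < sin (y1 / 2) := sin_pos_of_pos_of_lt_pi (by linarith) (by linarith)
  have hs2 : 0 < sin (y2 / 2) := sin_pos_of_pos_of_lt_pi (by linarith) (by linarith)
  have hco1 : 0 < cos (y1 / 2) := cos_pos_of_mem_Ioo ⟨by linarith, by linarith⟩
  have hco2 : 0 < cos (y2 / 2) := cos_pos_of_mem_Ioo ⟨by linarith, by linarith⟩
  -- cleared cosine laws
  have H1 : cos y1 * (sin x2 * sin x3) = cos x1 + cos x2 * cos x3 := by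
    rw [h1]; field_simp
  have H2 : cos y2 * (sin x3 * sin x1) = cos x2 + cos x3 * cos x1 := by
    rw [h2]; field_simp
  -- double angle
  have D1 : cos y1 = 2 * cos (y1 / 2) ^ 2 - 1 := by
    have := Real.cos_sq (y1 / 2)
    rw [show 2 * (y1 / 2) = y1 by ring] at this
    linarith
  have D2 : cos y2 = 2 * cos (y2 / 2) ^ 2 - 1 := by
    have := Real.cos_sq (y2 / 2)
    rw [show 2 * (y2 / 2) = y2 by ring] at this
    linarith
  have P1 : sin (y1 / 2) ^ 2 + cos (y1 / 2) ^ 2 = 1 := sin_sq_add_cos_sq _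
  have P2 : sin (y2 / 2) ^ 2 + cos (y2 / 2) ^ 2 = 1 := sin_sq_add_cos_sq _
  set S := cos ((x1 + x2 + x3) / 2) with hS
  -- sum-to-product identities
  have key1 : cos x1 + cos (x2 + x3) = 2 * S * cos r1 := by
    rw [Real.cos_add_cos, hr1, hS,
      show (x1 - (x2 + x3)) / 2 = -((x2 + x3 - x1) / 2) by ring, Real.cos_neg,
      show (x1 + (x2 + x3)) / 2 = (x1 + x2 + x3) / 2 by ring]
  have key1' : cos x1 + cos (x2 - x3) = 2 * cos r3 * cos r2 := by
    rw [Real.cos_add_cos, hr2, hr3,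
      show (x1 + (x2 - x3)) / 2 = (x1 + x2 - x3) / 2 by ring,
      show (x1 - (x2 - x3)) / 2 = (x3 + x1 - x2) / 2 by ring]
  have key2 : cos x2 + cos (x3 + x1) = 2 * S * cos r2 := by
    rw [Real.cos_add_cos, hr2, hS,
      show (x2 - (x3 + x1)) / 2 = -((x3 + x1 - x2) / 2) by ring, Real.cos_neg,
      show (x2 + (x3 + x1)) / 2 = (x1 + x2 + x3) / 2 by ring]
  have key2' : cos x2 + cos (x3 - x1) = 2 * cos r1 * cos r3 := by
    rw [Real.cos_add_cos, hr1, hr3,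
      show (x2 + (x3 - x1)) / 2 = (x2 + x3 - x1) / 2 by ring,
      show (x2 - (x3 - x1)) / 2 = (x1 + x2 - x3) / 2 by ring]
  have hca23 := Real.cos_add x2 x3
  have hcs23 := Real.cos_sub x2 x3
  have hca31 := Real.cos_add x3 x1
  have hcs31 := Real.cos_sub x3 x1
  -- the four key identities
  have E1 : sin (y1 / 2) ^ 2 * (sin x2 * sin x3) = -(S * cos r1) := by
    linear_combination (-(1:ℝ)/2) * H1 + (-(1:ℝ)/2) * key1 + (1/2 : ℝ) * hca23
      + (sin x2 * sin x3 / 2) * D1 + (sin x2 * sin x3) * P1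
  have F1 : cos (y1 / 2) ^ 2 * (sin x2 * sin x3) = cos r2 * cos r3 := by
    linear_combination ((1:ℝ)/2) * H1 + ((1:ℝ)/2) * key1' + (-(1:ℝ)/2) * hcs23
      + (-(sin x2 * sin x3) / 2) * D1
  have E2 : sin (y2 / 2) ^ 2 * (sin x3 * sin x1) = -(S * cos r2) := by
    linear_combination (-(1:ℝ)/2) * H2 + (-(1:ℝ)/2) * key2 + (1/2 : ℝ) * hca31
      + (sin x3 * sin x1 / 2) * D2 + (sin x3 * sin x1) * P2
  have F2 : cos (y2 / 2) ^ 2 * (sin x3 * sin x1) = cos r1 * cos r3 := by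
    linear_combination ((1:ℝ)/2) * H2 + ((1:ℝ)/2) * key2' + (-(1:ℝ)/2) * hcs31
      + (-(sin x3 * sin x1) / 2) * D2
  -- sign information
  have hc2c3 : 0 < cos r2 * cos r3 := by
    rw [← F1]; exact mul_pos (pow_pos hco1 2) (mul_pos sx2 sx3)
  have hc1c3 : 0 < cos r1 * cos r3 := by
    rw [← F2]; exact mul_pos (pow_pos hco2 2) (mul_pos sx3 sx1)
  have hc3 : cos r3 ≠ 0 := by
    intro h
    rw [h, mul_zero] at hc1c3
    exact lt_irrefl 0 hc1c3
  have hc1c2 : 0 < cos r1 * cos r2 := by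
    have heq : cos r1 * cos r2
        = (cos r1 * cos r3) * (cos r2 * cos r3) / cos r3 ^ 2 := by
      field_simp
    rw [heq]
    exact div_pos (mul_pos hc1c3 hc2c3) (pow_two_pos_of_ne_zero hc3)
  -- the squared equality
  set a := sin (y1 / 2) * cos (y2 / 2) * cos r2 with ha
  set b := sin (y2 / 2) * cos (y1 / 2) * cos r1 with hb
  have hKpos : 0 < sin x1 * sin x2 * sin x3 ^ 2 :=
    mul_pos (mul_pos sx1 sx2) (pow_pos sx3 2)
  have hsqK : a ^ 2 * (sin x1 * sin x2 * sin x3 ^ 2) =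
      b ^ 2 * (sin x1 * sin x2 * sin x3 ^ 2) := by
    rw [ha, hb]
    linear_combination (cos (y2 / 2) ^ 2 * (sin x3 * sin x1) * cos r2 ^ 2) * E1
      + (-(S * cos r1 * cos r2 ^ 2)) * F2
      + (-(cos (y1 / 2) ^ 2 * cos r1 ^ 2 * (sin x2 * sin x3))) * E2
      + (S * cos r2 * cos r1 ^ 2) * F1
  have hsq : a ^ 2 = b ^ 2 := mul_right_cancel₀ (ne_of_gt hKpos) hsqK
  have hab : 0 < a * b := by
    have : a * b = (sin (y1 / 2) * sin (y2 / 2) * (cos (y1 / 2) * cos (y2 / 2))) *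
        (cos r1 * cos r2) := by rw [ha, hb]; ring
    rw [this]
    exact mul_pos (mul_pos (mul_pos hs1 hs2) (mul_pos hco1 hco2)) hc1c2
  have haeqb : a = b := by
    have hz : (a - b) * (a + b) = 0 := by linear_combination hsq
    rcases mul_eq_zero.1 hz with h | h
    · linarith
    · exfalso
      have h1' : a = -b := by linarith
      have habe : a * b = -(b * b) := by rw [h1']; ring
      have hbb : 0 ≤ b * b := mul_self_nonneg b
      linarith
  rw [Real.tan_eq_sin_div_cos, Real.tan_eq_sin_div_cos]
  field_simp
  linear_combination haeqb

/-- The tangent law for the cosine law function: with `r_i = (x_j + x_k - x_i)/2`,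
`tan(y_i/2)/cos(r_i)` is independent of `i`. -/
theorem cosine_law_tangent_law (x1 x2 x3 y1 y2 y3 r1 r2 r3 : ℝ)
    (hx1 : x1 ∈ Ioo 0 π) (hx2 : x2 ∈ Ioo 0 π) (hx3 : x3 ∈ Ioo 0 π)
    (hy1 : y1 ∈ Ioo 0 π) (hy2 : y2 ∈ Ioo 0 π) (hy3 : y3 ∈ Ioo 0 π)
    (h1 : cos y1 = (cos x1 + cos x2 * cos x3) / (sin x2 * sin x3))
    (h2 : cos y2 = (cos x2 + cos x3 * cos x1) / (sin x3 * sin x1))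
    (h3 : cos y3 = (cos x3 + cos x1 * cos x2) / (sin x1 * sin x2))
    (hr1 : r1 = (x2 + x3 - x1) / 2) (hr2 : r2 = (x3 + x1 - x2) / 2)
    (hr3 : r3 = (x1 + x2 - x3) / 2)
    (hc1 : cos r1 ≠ 0) (hc2 : cos r2 ≠ 0) (hc3 : cos r3 ≠ 0) :
    tan (y1 / 2) / cos r1 = tan (y2 / 2) / cos r2 ∧
    tan (y2 / 2) / cos r2 = tan (y3 / 2) / cos r3 := by
  constructor
  · exact tangent_pair x1 x2 x3 y1 y2 r1 r2 r3 hx1 hx2 hx3 hy1 hy2 h1 h2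
      hr1 hr2 hr3 hc1 hc2
  · exact tangent_pair x2 x3 x1 y2 y3 r2 r3 r1 hx2 hx3 hx1 hy2 hy3 h2 h3
      hr2 hr3 hr1 hc2 hc3
end

section
/- For a Euclidean triangle with side lengths r₁+r₂, r₂+r₃, r₃+r₁ (r_i > 0) and inner angle a_i opposite the side of length r_j+r_k, the 1-form w = Σᵢ (a_i/r_i) dr_i is closed on the space of positive radius triples, i.e., ∂(a_i/r_i)/∂r_j = ∂(a_j/r_j)/∂r_i for all i,j. -/
open Real

noncomputable def packAngle (x y z : ℝ) : ℝ :=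
  Real.arccos (((x + y) ^ 2 + (x + z) ^ 2 - (y + z) ^ 2) / (2 * (x + y) * (x + z)))

lemma packAngle_symm (x y z : ℝ) : packAngle x y z = packAngle x z y := by
  unfold packAngle
  congr 1
  ring

lemma hasDerivAt_packAngle (x y z : ℝ) (hx : 0 < x) (hy : 0 < y) (hz : 0 < z) :
    HasDerivAt (fun t => packAngle x t z)
      (x * z / ((x + y) * Real.sqrt (x * y * z * (x + y + z)))) y := by
  have hxy : (0:ℝ) < x + y := by linarith
  have hxz : (0:ℝ) < x + z := by linarith
  have hQpos : (0:ℝ) < x * y * z * (x + y + z) := by positivity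
  set s := Real.sqrt (x * y * z * (x + y + z)) with hs_def
  have hs : 0 < s := Real.sqrt_pos.mpr hQpos
  have hs2 : s ^ 2 = x * y * z * (x + y + z) := Real.sq_sqrt hQpos.le
  set F : ℝ → ℝ := fun t => ((x + t) ^ 2 + (x + z) ^ 2 - (t + z) ^ 2) / (2 * (x + t) * (x + z))
    with hF_def
  have hFy : F y = ((x + y) ^ 2 + (x + z) ^ 2 - (y + z) ^ 2) / (2 * (x + y) * (x + z)) := rfl
  have hden : (0:ℝ) < 2 * (x + y) * (x + z) := by positivity
  have hF1 : F y < 1 := by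
    rw [hFy, div_lt_one hden]; nlinarith
  have hFn1 : -1 < F y := by
    rw [hFy, lt_div_iff₀ hden]; nlinarith
  have hdF : HasDerivAt F (-(2 * x * z) / ((x + y) ^ 2 * (x + z))) y := by
    have hN : HasDerivAt (fun t : ℝ => (x + t) ^ 2 + (x + z) ^ 2 - (t + z) ^ 2)
        (2 * (x + y) - 2 * (y + z)) y := by
      have h1 : HasDerivAt (fun t : ℝ => (x + t) ^ 2) (2 * (x + y)) y := by
        have := ((hasDerivAt_id y).const_add x).fun_pow 2
        simpa using this
      have h2 : HasDerivAt (fun t : ℝ => (t + z) ^ 2) (2 * (y + z)) y := by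
        have := ((hasDerivAt_id y).add_const z).fun_pow 2
        simpa using this
      simpa using (h1.add_const ((x + z) ^ 2)).fun_sub h2
    have hM : HasDerivAt (fun t : ℝ => 2 * (x + t) * (x + z)) (2 * (x + z)) y := by
      have := (((hasDerivAt_id y).const_add x).const_mul 2).mul_const (x + z)
      simpa [mul_comm, mul_assoc] using this
    have := hN.fun_div hM (by positivity)
    refine this.congr_deriv ?_
    field_simp
    ring
  have hsq : Real.sqrt (1 - F y ^ 2) = 2 * s / ((x + y) * (x + z)) := by
    have h1 : 1 - F y ^ 2 = (2 * s / ((x + y) * (x + z))) ^ 2 := by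
      rw [hFy, div_pow, div_pow, mul_pow 2 s, hs2]
      field_simp
      ring
    rw [h1, Real.sqrt_sq (by positivity)]
  have hcomp := (Real.hasDerivAt_arccos (ne_of_gt hFn1) (ne_of_lt hF1)).comp y hdF
  refine hcomp.congr_deriv ?_
  rw [hsq]
  field_simp

/-- Colin de Verdière's 1-form `w = Σᵢ (aᵢ/rᵢ) drᵢ` for Euclidean circle packing
triangles is closed: the mixed partials agree, `∂(aᵢ/rᵢ)/∂r_j = ∂(a_j/r_j)/∂rᵢ`. -/
theorem cdv_one_form_closed (r1 r2 r3 : ℝ) (h1 : 0 < r1) (h2 : 0 < r2) (h3 : 0 < r3) :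
    deriv (fun t => packAngle r1 t r3 / r1) r2 = deriv (fun t => packAngle r2 t r3 / r2) r1 ∧
    deriv (fun t => packAngle r1 r2 t / r1) r3 = deriv (fun t => packAngle r3 r2 t / r3) r1 ∧
    deriv (fun t => packAngle r2 r1 t / r2) r3 = deriv (fun t => packAngle r3 r1 t / r3) r2 := by
  have key : ∀ x y z : ℝ, 0 < x → 0 < y → 0 < z →
      deriv (fun t => packAngle x t z / x) y
        = z / ((x + y) * Real.sqrt (x * y * z * (x + y + z))) := by
    intro x y z hx hy hz
    rw [((hasDerivAt_packAngle x y z hx hy hz).div_const x).deriv]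
    field_simp
  have key' : ∀ x y z : ℝ, 0 < x → 0 < y → 0 < z →
      deriv (fun t => packAngle x y t / x) z
        = y / ((x + z) * Real.sqrt (x * y * z * (x + y + z))) := by
    intro x y z hx hy hz
    have : (fun t => packAngle x y t / x) = fun t => packAngle x t y / x := by
      funext t; rw [packAngle_symm]
    rw [this, key x z y hx hz hy]
    ring_nf
  refine ⟨?_, ?_, ?_⟩
  · rw [key r1 r2 r3 h1 h2 h3, key r2 r1 r3 h2 h1 h3]
    ring_nf
  · rw [key' r1 r2 r3 h1 h2 h3, key' r3 r2 r1 h3 h2 h1]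
    ring_nf
  · rw [key' r2 r1 r3 h2 h1 h3, key' r3 r1 r2 h3 h1 h2]
    ring_nf
end

section
/- For a hyperbolic triangle with side lengths r₁+r₂, r₂+r₃, r₃+r₁ (r_i > 0) and angle θ_i opposite the side r_j+r_k: as r_i → ∞ with r_j, r_k in a fixed compact subset of (0,∞), the angle θ_i tends to 0. -/
open Real

/-- The angle at the vertex of radius `x` in the hyperbolic triangle with side
lengths `x+y`, `x+z`, `y+z` (hyperbolic circle packing triangle). -/
noncomputable def hypPackAngle (x y z : ℝ) : ℝ :=
  Real.arccos ((Real.cosh (x + y) * Real.cosh (x + z) - Real.cosh (y + z)) /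
    (Real.sinh (x + y) * Real.sinh (x + z)))

/-- As `r_i → ∞` with `r_j, r_k` in a fixed compact subset of `(0,∞)`, the angle
`θ_i` of the hyperbolic circle packing triangle tends to `0`, uniformly. -/
theorem hyp_pack_angle_tendsto_zero (K : Set ℝ) (hK : IsCompact K) (hKpos : K ⊆ Set.Ioi 0) :
    ∀ ε > 0, ∃ M : ℝ, ∀ r1 ≥ M, ∀ r2 ∈ K, ∀ r3 ∈ K, hypPackAngle r1 r2 r3 < ε := by
  intro ε hε
  set ε' : ℝ := min ε π with hε'def
  have hπ : (0:ℝ) < π := Real.pi_pos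
  have hε'pos : 0 < ε' := lt_min hε hπ
  have hε'le : ε' ≤ π := min_le_right _ _
  have hcos1 : Real.cos ε' < 1 := by
    have := Real.strictAntiOn_cos (Set.mem_Icc.2 ⟨le_rfl, hπ.le⟩)
      (Set.mem_Icc.2 ⟨hε'pos.le, hε'le⟩) hε'pos
    simpa [Real.cos_zero] using this
  obtain ⟨b, hb⟩ := hK.bddAbove
  set δ : ℝ := 1 - Real.cos ε' with hδ
  have hδpos : 0 < δ := by simp only [hδ]; linarith
  have hcbpos : 0 < Real.cosh (2 * b) := Real.cosh_pos _
  set C : ℝ := Real.sqrt (2 * Real.cosh (2 * b) / δ) with hC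
  have hCsqarg : 0 < 2 * Real.cosh (2 * b) / δ := by positivity
  refine ⟨max 1 (Real.arsinh C), fun r1 hr1 r2 hr2 r3 hr3 => ?_⟩
  have h2 : 0 < r2 := hKpos hr2
  have h3 : 0 < r3 := hKpos hr3
  have hb2 : r2 ≤ b := hb hr2
  have hb3 : r3 ≤ b := hb hr3
  have hr1' : 1 ≤ r1 := le_trans (le_max_left _ _) hr1
  have hsinhC : C ≤ Real.sinh r1 := by
    rw [← Real.sinh_arsinh C]
    exact Real.sinh_le_sinh.2 (le_trans (le_max_right _ _) hr1)
  have hCpos : 0 < C := Real.sqrt_pos.2 hCsqarg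
  have hCsq : C ^ 2 = 2 * Real.cosh (2 * b) / δ := Real.sq_sqrt hCsqarg.le
  have hs1 : 0 < Real.sinh r1 := lt_of_lt_of_le hCpos hsinhC
  have hs12 : Real.sinh r1 ≤ Real.sinh (r1 + r2) := Real.sinh_le_sinh.2 (by linarith)
  have hs13 : Real.sinh r1 ≤ Real.sinh (r1 + r3) := Real.sinh_le_sinh.2 (by linarith)
  have hs12p : 0 < Real.sinh (r1 + r2) := lt_of_lt_of_le hs1 hs12
  have hs13p : 0 < Real.sinh (r1 + r3) := lt_of_lt_of_le hs1 hs13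
  set S : ℝ := Real.sinh (r1 + r2) * Real.sinh (r1 + r3) with hS
  have hSpos : 0 < S := mul_pos hs12p hs13p
  have hSge : C ^ 2 ≤ S := by
    have h1 : C * C ≤ Real.sinh r1 * Real.sinh r1 :=
      mul_le_mul hsinhC hsinhC hCpos.le hs1.le
    have h2' : Real.sinh r1 * Real.sinh r1 ≤ S :=
      mul_le_mul hs12 hs13 hs1.le hs12p.le
    nlinarith
  set Q : ℝ := (Real.cosh (r1 + r2) * Real.cosh (r1 + r3) - Real.cosh (r2 + r3)) / S with hQ
  have hcoshsub : Real.cosh (r1 + r2) * Real.cosh (r1 + r3) - S = Real.cosh (r2 - r3) := by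
    rw [hS, ← Real.cosh_sub]; ring_nf
  have hcb : Real.cosh (r2 + r3) ≤ Real.cosh (2 * b) := by
    rw [Real.cosh_le_cosh, abs_of_pos (by linarith : (0:ℝ) < r2 + r3)]
    calc r2 + r3 ≤ 2 * b := by linarith
    _ ≤ |2 * b| := le_abs_self _
  have hQ1 : Q ≤ 1 := by
    rw [hQ, div_le_one hSpos]
    have h1 : Real.cosh (r2 - r3) ≤ Real.cosh (r2 + r3) := by
      rw [Real.cosh_le_cosh, abs_of_pos (by linarith : (0:ℝ) < r2 + r3)]
      exact abs_le.2 ⟨by linarith, by linarith⟩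
    linarith
  have hQlb : Real.cos ε' < Q := by
    rw [hQ, lt_div_iff₀ hSpos]
    have hfrac : Real.cosh (r2 + r3) ≤ δ / 2 * S := by
      have h0 : Real.cosh (2 * b) = δ / 2 * C ^ 2 := by
        rw [hCsq]; field_simp
      nlinarith
    have hcd : (0:ℝ) < Real.cosh (r2 - r3) := Real.cosh_pos _
    have hδ1 : δ / 2 * S < δ * S := by nlinarith
    have hce : Real.cos ε' * S = S - δ * S := by rw [hδ]; ring
    linarith
  have hQm1 : -1 ≤ Q := le_trans (Real.neg_one_le_cos ε') hQlb.le
  have harccos : Real.arccos Q < ε' := by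
    have := Real.strictAntiOn_arccos
      (Set.mem_Icc.2 ⟨Real.neg_one_le_cos ε', Real.cos_le_one ε'⟩)
      (Set.mem_Icc.2 ⟨hQm1, hQ1⟩) hQlb
    rwa [Real.arccos_cos hε'pos.le hε'le] at this
  calc hypPackAngle r1 r2 r3 = Real.arccos Q := by rw [hypPackAngle, hQ, hS]
  _ < ε' := harccos
  _ ≤ ε := min_le_left _ _
end

section
/- For a hyperbolic triangle with side lengths r₁+r₂, r₂+r₃, r₃+r₁ and angle θ_i opposite side r_j+r_k: if (r_i, r_j, r_k) → (0, f_j, f_k) with f_j, f_k > 0, then θ_i → π. -/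
open Real Filter Topology

/-- As `(r_i, r_j, r_k) → (0, f_j, f_k)` with `f_j, f_k > 0`, the angle `θ_i`
of the hyperbolic circle packing triangle tends to `π`. -/
theorem hyp_pack_angle_tendsto_pi (f2 f3 : ℝ) (hf2 : 0 < f2) (hf3 : 0 < f3) :
    Tendsto (fun p : ℝ × ℝ × ℝ => hypPackAngle p.1 p.2.1 p.2.2)
      (nhdsWithin (0, f2, f3) {p : ℝ × ℝ × ℝ | 0 < p.1 ∧ 0 < p.2.1 ∧ 0 < p.2.2})
      (nhds π) := by
  have hden : Real.sinh ((0 : ℝ) + f2) * Real.sinh ((0 : ℝ) + f3) ≠ 0 := by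
    simp only [zero_add]
    exact ne_of_gt (mul_pos (Real.sinh_pos_iff.2 hf2) (Real.sinh_pos_iff.2 hf3))
  have hc : ContinuousAt (fun p : ℝ × ℝ × ℝ => hypPackAngle p.1 p.2.1 p.2.2)
      (0, f2, f3) := by
    unfold hypPackAngle
    apply Real.continuous_arccos.continuousAt.comp
    exact ContinuousAt.div (by fun_prop) (by fun_prop) hden
  have hval : hypPackAngle 0 f2 f3 = π := by
    unfold hypPackAngle
    have : (Real.cosh (0 + f2) * Real.cosh (0 + f3) - Real.cosh (f2 + f3)) /
        (Real.sinh (0 + f2) * Real.sinh (0 + f3)) = -1 := by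
      rw [div_eq_iff hden]
      simp only [zero_add, Real.cosh_add]
      ring
    rw [this, Real.arccos_neg_one]
  have := hc.tendsto
  rw [show hypPackAngle (0, f2, f3).1 (0, f2, f3).2.1 (0, f2, f3).2.2
      = π from hval] at this
  exact tendsto_nhdsWithin_of_tendsto_nhds this
end

section
/- For a hyperbolic triangle with side lengths r₁+r₂, r₂+r₃, r₃+r₁ and angles θ_i: as (r₁, r₂, r₃) → (0,0,0), the angle sum θ₁ + θ₂ + θ₃ tends to π. -/
open Real Filter Topology

/-- The corresponding Euclidean angle. -/
noncomputable def eucAngle (x y z : ℝ) : ℝ :=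
  Real.arccos ((x*(x+y+z) - y*z) / ((x+y)*(x+z)))

lemma uc_arccos : UniformContinuous Real.arccos := by
  have h1 : UniformContinuous (fun x : Set.Icc (-1:ℝ) 1 => Real.arccos x) :=
    CompactSpace.uniformContinuous_of_continuous
      (Real.continuous_arccos.comp continuous_subtype_val)
  have h2 : UniformContinuous (Set.projIcc (-1:ℝ) 1 (by norm_num)) :=
    (LipschitzWith.projIcc (by norm_num)).uniformContinuous
  have h3 := h1.comp h2
  have heq : (fun x : Set.Icc (-1:ℝ) 1 => Real.arccos x) ∘ Set.projIcc (-1:ℝ) 1 (by norm_num)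
      = Real.arccos := by
    funext x
    simp only [Function.comp_apply, Real.arccos]
    rw [Real.arcsin_projIcc]
  rwa [heq] at h3

lemma sinh_le_poly {t : ℝ} (h0 : 0 ≤ t) (h1 : t ≤ 1) : Real.sinh t ≤ t * (1 + 2*t) := by
  have hb := Real.exp_bound (x := t) (by rwa [abs_of_nonneg h0]) (n := 3) (by norm_num)
  have hb' := Real.exp_bound (x := -t) (by rwa [abs_neg, abs_of_nonneg h0]) (n := 3) (by norm_num)
  simp only [Finset.sum_range_succ, Finset.sum_range_zero] at hb hb'
  rw [abs_of_nonneg h0] at hb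
  rw [abs_neg, abs_of_nonneg h0] at hb'
  norm_num [Nat.factorial] at hb hb'
  rw [abs_le] at hb hb'
  rw [Real.sinh_eq, div_le_iff₀ (by positivity : (0:ℝ) < 2)]
  nlinarith [hb.1, hb.2, hb'.1, hb'.2, sq_nonneg t,
    mul_le_mul_of_nonneg_left h1 (mul_nonneg h0 h0)]

lemma hyp_num_eq (x y z : ℝ) :
    Real.cosh (x + y) * Real.cosh (x + z) - Real.cosh (y + z)
      = Real.sinh x * Real.sinh (x + y + z) - Real.sinh y * Real.sinh z := by
  have h := Real.cosh_sq x
  simp only [Real.cosh_add, Real.sinh_add]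
  linear_combination (Real.cosh y * Real.cosh z) * h

lemma sinh_prod_bounds {u v : ℝ} (hu : 0 < u) (hv : 0 < v) (huv : u + v ≤ 1) :
    u * v ≤ Real.sinh u * Real.sinh v ∧
      Real.sinh u * Real.sinh v ≤ u * v * (1 + 3 * (u + v)) := by
  have h1 : u ≤ Real.sinh u := Real.self_le_sinh_iff.2 hu.le
  have h2 : v ≤ Real.sinh v := Real.self_le_sinh_iff.2 hv.le
  have h3 : Real.sinh u ≤ u * (1 + 2*u) := sinh_le_poly hu.le (by linarith)
  have h4 : Real.sinh v ≤ v * (1 + 2*v) := sinh_le_poly hv.le (by linarith)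
  have h5 : Real.sinh u * Real.sinh v ≤ (u * (1 + 2*u)) * (v * (1 + 2*v)) :=
    mul_le_mul h3 h4 (by linarith) (by positivity)
  have h6 : 4*(u*v) ≤ u + v := by nlinarith [sq_nonneg (u - v), sq_nonneg (u + v)]
  have h7 := mul_le_mul_of_nonneg_left h6 (mul_pos hu hv).le
  exact ⟨by nlinarith, by nlinarith⟩

set_option maxHeartbeats 1000000 in
lemma ratio_close {x y z : ℝ} (hx : 0 < x) (hy : 0 < y) (hz : 0 < z)
    (hs : x + y + z ≤ 1/2) :
    |(Real.cosh (x+y) * Real.cosh (x+z) - Real.cosh (y+z)) /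
        (Real.sinh (x+y) * Real.sinh (x+z)) -
      (x*(x+y+z) - y*z) / ((x+y)*(x+z))| ≤ 12*(x+y+z) := by
  have hs0 : 0 < x + y + z := by positivity
  set s : ℝ := x + y + z with hsdef
  set A : ℝ := Real.sinh x * Real.sinh s with hA
  set B : ℝ := Real.sinh y * Real.sinh z with hB
  set D : ℝ := Real.sinh (x+y) * Real.sinh (x+z) with hD
  set a : ℝ := x * s with ha
  set b : ℝ := y * z with hb
  set d : ℝ := (x+y) * (x+z) with hd
  obtain ⟨hA1, hA2⟩ := sinh_prod_bounds hx hs0 (by simp only [hsdef]; linarith)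
  obtain ⟨hB1, hB2⟩ := sinh_prod_bounds hy hz (by linarith)
  obtain ⟨hD1, hD2⟩ := sinh_prod_bounds (by linarith : (0:ℝ) < x+y)
    (by linarith : (0:ℝ) < x+z) (by linarith)
  have hd0 : (0:ℝ) < d := by rw [hd]; positivity
  have hD0 : (0:ℝ) < D := lt_of_lt_of_le hd0 hD1
  have ha0 : (0:ℝ) ≤ a := by rw [ha]; positivity
  have hb0 : (0:ℝ) ≤ b := by rw [hb]; positivity
  have hA2' : A ≤ a + 6*(s*a) := by
    nlinarith [hA2, mul_nonneg ha0 (by simp only [hsdef]; linarith : (0:ℝ) ≤ s - x)]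
  have hB2' : B ≤ b + 6*(s*b) := by
    nlinarith [hB2, mul_nonneg hb0 (by simp only [hsdef]; linarith : (0:ℝ) ≤ 2*s - (y+z))]
  have hD2' : D ≤ d + 6*(s*d) := by
    nlinarith [hD2, mul_nonneg hd0.le (by simp only [hsdef]; linarith : (0:ℝ) ≤ 2*s - (x+y+(x+z)))]
  have hdab : d = a + b := by rw [hd, ha, hb, hsdef]; ring
  have hsd : s*d = s*a + s*b := by rw [hdab]; ring
  -- numerator bound
  have h1 : |(A-a) - (B-b)| ≤ 6*(s*d) := by
    rw [abs_le]
    have hq1 : (0:ℝ) ≤ s*a := mul_nonneg hs0.le ha0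
    have hq2 : (0:ℝ) ≤ s*b := mul_nonneg hs0.le hb0
    constructor <;> linarith
  have h2 : |a - b| ≤ d := abs_le.2 ⟨by linarith, by linarith⟩
  have h3 : 0 ≤ D - d := by linarith
  have h4 : D - d ≤ 6*(s*d) := by linarith
  have hnum : |(A - B) * d - (a - b) * D| ≤ 12 * s * (d * d) := by
    have hid : (A - B) * d - (a - b) * D = ((A-a) - (B-b))*d - (a-b)*(D-d) := by ring
    rw [hid]
    calc |((A-a) - (B-b))*d - (a-b)*(D-d)|
        ≤ |((A-a) - (B-b))*d| + |(a-b)*(D-d)| := abs_sub _ _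
      _ = |(A-a) - (B-b)| * d + |a-b| * (D-d) := by
          rw [abs_mul (A - a - (B - b)) d, abs_mul (a-b) (D-d), abs_of_nonneg hd0.le,
            abs_of_nonneg h3]
      _ ≤ (6*(s*d))*d + d*(6*(s*d)) :=
          add_le_add (mul_le_mul_of_nonneg_right h1 hd0.le)
            (mul_le_mul h2 h4 h3 hd0.le)
      _ = 12 * s * (d * d) := by ring
  have heq : (Real.cosh (x+y) * Real.cosh (x+z) - Real.cosh (y+z)) / D - (a - b) / d
      = ((A - B) * d - (a - b) * D) / (D * d) := by
    rw [hyp_num_eq, ← hsdef, ← hA, ← hB, div_sub_div _ _ hD0.ne' hd0.ne']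
    ring_nf
  rw [heq, abs_div, abs_of_pos (mul_pos hD0 hd0), div_le_iff₀ (mul_pos hD0 hd0)]
  calc |(A - B) * d - (a - b) * D| ≤ 12 * s * (d * d) := hnum
    _ ≤ 12 * s * (D * d) := by
        nlinarith [mul_le_mul_of_nonneg_right hD1 hd0.le, mul_pos hd0 hd0]

lemma eucRatio_mem {x y z : ℝ} (hx : 0 < x) (hy : 0 < y) (hz : 0 < z) :
    -1 ≤ (x*(x+y+z) - y*z) / ((x+y)*(x+z)) ∧
      (x*(x+y+z) - y*z) / ((x+y)*(x+z)) ≤ 1 := by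
  have hd : (0:ℝ) < (x+y)*(x+z) := by positivity
  constructor
  · rw [le_div_iff₀ hd]; nlinarith
  · rw [div_le_one hd]; nlinarith

lemma sin_eucAngle {x y z : ℝ} (hx : 0 < x) (hy : 0 < y) (hz : 0 < z) :
    Real.sin (eucAngle x y z)
      = 2 * Real.sqrt (x*y*z*(x+y+z)) / ((x+y)*(x+z)) := by
  have hd : (0:ℝ) < (x+y)*(x+z) := by positivity
  have hQ : (0:ℝ) ≤ x*y*z*(x+y+z) := by positivity
  rw [eucAngle, Real.sin_arccos]
  have key : 1 - ((x*(x+y+z) - y*z) / ((x+y)*(x+z)))^2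
      = (2 * Real.sqrt (x*y*z*(x+y+z)) / ((x+y)*(x+z)))^2 := by
    rw [div_pow, div_pow, mul_pow 2 (Real.sqrt (x*y*z*(x+y+z))) 2, Real.sq_sqrt hQ]
    field_simp
    ring
  rw [key, Real.sqrt_sq (by positivity)]

lemma eucAngle_pos_lt_pi {x y z : ℝ} (hx : 0 < x) (hy : 0 < y) (hz : 0 < z) :
    0 < eucAngle x y z ∧ eucAngle x y z < π := by
  have hsin : 0 < Real.sin (eucAngle x y z) := by
    rw [sin_eucAngle hx hy hz]
    have : 0 < Real.sqrt (x*y*z*(x+y+z)) := Real.sqrt_pos.2 (by positivity)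
    positivity
  have h0 : 0 ≤ eucAngle x y z := Real.arccos_nonneg _
  have h1 : eucAngle x y z ≤ π := Real.arccos_le_pi _
  constructor
  · rcases h0.lt_or_eq with h | h
    · exact h
    · exfalso; rw [← h, Real.sin_zero] at hsin; exact lt_irrefl 0 hsin
  · rcases h1.lt_or_eq with h | h
    · exact h
    · exfalso; rw [h, Real.sin_pi] at hsin; exact lt_irrefl 0 hsin

lemma euc_sum {x y z : ℝ} (hx : 0 < x) (hy : 0 < y) (hz : 0 < z) :
    eucAngle x y z + eucAngle y x z + eucAngle z x y = π := by
  set θ1 := eucAngle x y z with ht1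
  set θ2 := eucAngle y x z with ht2
  set θ3 := eucAngle z x y with ht3
  set Q := Real.sqrt (x*y*z*(x+y+z)) with hQdef
  have hQpos : 0 < Q := Real.sqrt_pos.2 (by positivity)
  have hQsq : Q^2 = x*y*z*(x+y+z) := Real.sq_sqrt (by positivity)
  obtain ⟨hm1a, hm1b⟩ := eucRatio_mem hx hy hz
  obtain ⟨hm2a, hm2b⟩ := eucRatio_mem hy hx hz
  obtain ⟨hm3a, hm3b⟩ := eucRatio_mem hz hx hy
  have hc1 : Real.cos θ1 = (x*(x+y+z) - y*z) / ((x+y)*(x+z)) :=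
    Real.cos_arccos hm1a hm1b
  have hc2 : Real.cos θ2 = (y*(y+x+z) - x*z) / ((y+x)*(y+z)) :=
    Real.cos_arccos hm2a hm2b
  have hc3 : Real.cos θ3 = (z*(z+x+y) - x*y) / ((z+x)*(z+y)) :=
    Real.cos_arccos hm3a hm3b
  have hs2 : Real.sin θ2 = 2*Q/((y+x)*(y+z)) := by
    rw [ht2, sin_eucAngle hy hx hz, hQdef,
      show y*x*z*(y+x+z) = x*y*z*(x+y+z) by ring]
  have hs3 : Real.sin θ3 = 2*Q/((z+x)*(z+y)) := by
    rw [ht3, sin_eucAngle hz hx hy, hQdef,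
      show z*x*y*(z+x+y) = x*y*z*(x+y+z) by ring]
  obtain ⟨h1p, h1l⟩ := eucAngle_pos_lt_pi hx hy hz
  obtain ⟨h2p, h2l⟩ := eucAngle_pos_lt_pi hy hx hz
  obtain ⟨h3p, h3l⟩ := eucAngle_pos_lt_pi hz hx hy
  have hxy : (0:ℝ) < (y+x)*(y+z) := by positivity
  have hxz : (0:ℝ) < (z+x)*(z+y) := by positivity
  have hd1 : (0:ℝ) < (x+y)*(x+z) := by positivity
  have hss : Real.sin θ2 * Real.sin θ3
      = 4*(x*y*z*(x+y+z)) / (((y+x)*(y+z))*((z+x)*(z+y))) := by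
    rw [hs2, hs3, div_mul_div_comm, show 2*Q*(2*Q) = 4*Q^2 by ring, hQsq]
  have hcos23 : Real.cos (θ2 + θ3) = -((x*(x+y+z) - y*z) / ((x+y)*(x+z))) := by
    rw [Real.cos_add, hc2, hc3, hss]
    field_simp
    ring
  have hsin23 : Real.sin (θ2 + θ3) = 2*Q/((x+y)*(x+z)) := by
    rw [Real.sin_add, hc2, hc3, hs2, hs3]
    field_simp
    ring
  have hsin23pos : 0 < Real.sin (θ2 + θ3) := by
    rw [hsin23]; positivity
  have h23l : θ2 + θ3 < π := by
    by_contra hcon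
    push_neg at hcon
    have hle : θ2 + θ3 - π ≤ π := by linarith
    have hge : 0 ≤ θ2 + θ3 - π := by linarith
    have := Real.sin_nonneg_of_nonneg_of_le_pi hge hle
    rw [Real.sin_sub_pi] at this
    linarith
  have hmem1 : θ2 + θ3 ∈ Set.Icc 0 π := ⟨by linarith, by linarith⟩
  have hmem2 : π - θ1 ∈ Set.Icc 0 π := ⟨by linarith, by linarith⟩
  have hkey : θ2 + θ3 = π - θ1 := by
    refine Real.injOn_cos hmem1 hmem2 ?_
    rw [hcos23, Real.cos_pi_sub, hc1]
  linarith

lemma hyp_euc_close : ∀ ε > (0:ℝ), ∃ δ > (0:ℝ), ∀ x y z : ℝ,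
    0 < x → 0 < y → 0 < z → x + y + z < δ →
    |hypPackAngle x y z - eucAngle x y z| < ε := by
  intro ε hε
  obtain ⟨η, hη, hUC⟩ := Metric.uniformContinuous_iff.1 uc_arccos ε hε
  refine ⟨min (1/2) (η/13), by positivity, ?_⟩
  intro x y z hx hy hz hlt
  have hs1 : x+y+z ≤ 1/2 := le_of_lt (lt_of_lt_of_le hlt (min_le_left _ _))
  have h12 : 12*(x+y+z) < η := by
    have := lt_of_lt_of_le hlt (min_le_right _ _)
    linarith
  have hclose := ratio_close hx hy hz hs1
  have hd : dist ((Real.cosh (x+y) * Real.cosh (x+z) - Real.cosh (y+z)) /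
      (Real.sinh (x+y) * Real.sinh (x+z)))
      ((x*(x+y+z) - y*z) / ((x+y)*(x+z))) < η := by
    rw [Real.dist_eq]
    exact lt_of_le_of_lt hclose h12
  have := hUC hd
  rw [Real.dist_eq] at this
  exact this

/-- As `(r₁, r₂, r₃) → (0,0,0)`, the angle sum `θ₁ + θ₂ + θ₃` of the hyperbolic
circle packing triangle tends to `π`. -/
theorem hyp_pack_angle_sum_tendsto_pi :
    Tendsto (fun p : ℝ × ℝ × ℝ =>
        hypPackAngle p.1 p.2.1 p.2.2 + hypPackAngle p.2.1 p.1 p.2.2 +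
          hypPackAngle p.2.2 p.1 p.2.1)
      (nhdsWithin (0, 0, 0) {p : ℝ × ℝ × ℝ | 0 < p.1 ∧ 0 < p.2.1 ∧ 0 < p.2.2})
      (nhds π) := by
  set L := nhdsWithin ((0:ℝ), (0:ℝ), (0:ℝ))
    {p : ℝ × ℝ × ℝ | 0 < p.1 ∧ 0 < p.2.1 ∧ 0 < p.2.2} with hL
  have hS : Tendsto (fun p : ℝ × ℝ × ℝ => p.1 + p.2.1 + p.2.2) L (nhds 0) := by
    have hc : Continuous (fun p : ℝ × ℝ × ℝ => p.1 + p.2.1 + p.2.2) := by fun_prop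
    have := (hc.tendsto ((0:ℝ), (0:ℝ), (0:ℝ))).mono_left
      (nhdsWithin_le_nhds (s := {p : ℝ × ℝ × ℝ | 0 < p.1 ∧ 0 < p.2.1 ∧ 0 < p.2.2}))
    simpa using this
  have hmem : ∀ᶠ p in L, 0 < p.1 ∧ 0 < p.2.1 ∧ 0 < p.2.2 :=
    eventually_mem_nhdsWithin
  have hdiff : Tendsto (fun p : ℝ × ℝ × ℝ =>
      (hypPackAngle p.1 p.2.1 p.2.2 - eucAngle p.1 p.2.1 p.2.2) +
      (hypPackAngle p.2.1 p.1 p.2.2 - eucAngle p.2.1 p.1 p.2.2) +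
      (hypPackAngle p.2.2 p.1 p.2.1 - eucAngle p.2.2 p.1 p.2.1)) L (nhds 0) := by
    rw [Metric.tendsto_nhds]
    intro ε hε
    obtain ⟨δ, hδ, hkey⟩ := hyp_euc_close (ε/3) (by linarith)
    have hev2 : ∀ᶠ p in L, p.1 + p.2.1 + p.2.2 < δ :=
      hS.eventually_lt_const hδ
    filter_upwards [hmem, hev2] with p hp hplt
    obtain ⟨hp1, hp2, hp3⟩ := hp
    have k1 := hkey p.1 p.2.1 p.2.2 hp1 hp2 hp3 hplt
    have k2 := hkey p.2.1 p.1 p.2.2 hp2 hp1 hp3 (by linarith)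
    have k3 := hkey p.2.2 p.1 p.2.1 hp3 hp1 hp2 (by linarith)
    rw [dist_zero_right]
    set a1 := hypPackAngle p.1 p.2.1 p.2.2 - eucAngle p.1 p.2.1 p.2.2
    set a2 := hypPackAngle p.2.1 p.1 p.2.2 - eucAngle p.2.1 p.1 p.2.2
    set a3 := hypPackAngle p.2.2 p.1 p.2.1 - eucAngle p.2.2 p.1 p.2.1
    calc |a1 + a2 + a3| ≤ |a1 + a2| + |a3| := abs_add_le _ _
      _ ≤ |a1| + |a2| + |a3| := by
          have := abs_add_le a1 a2
          linarith
      _ < ε := by linarith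
  have hfin : Tendsto (fun p : ℝ × ℝ × ℝ =>
      ((hypPackAngle p.1 p.2.1 p.2.2 - eucAngle p.1 p.2.1 p.2.2) +
      (hypPackAngle p.2.1 p.1 p.2.2 - eucAngle p.2.1 p.1 p.2.2) +
      (hypPackAngle p.2.2 p.1 p.2.1 - eucAngle p.2.2 p.1 p.2.1)) + π) L (nhds (0 + π)) :=
    hdiff.add_const π
  rw [zero_add] at hfin
  refine hfin.congr' ?_
  filter_upwards [hmem] with p hp
  obtain ⟨hp1, hp2, hp3⟩ := hp
  have hsum := euc_sum hp1 hp2 hp3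
  linarith
end
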